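/- Let M be a monoid, A an M-semimodule, and f, f': M × M → A 2-cocycles. If the Schreier extensions E_f and E_{f'} are congruent, then f and f' are strongly cohomologous. -/

import Mathlib

universe u v

section SchreierSemimodule

/- Throughout, `M` is a (multiplicatively written) monoid and an `M`-semimodule is an
additively written abelian monoid `A` together with a `DistribMulAction` of `M` on `A`,
i.e. an action satisfying `x • (a + a') = x • a + x • a'`, `x • 0 = 0`,
`(x * y) • a = x • (y • a)` and `1 • a = a`. -/

variable (M : Type u) (A : Type v) [Monoid M] [AddCommMonoid A] [DistribMulAction M A]

/-- `u` is a representative over `x ∈ M` for the sequence `A →^κ B →^σ M`: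
`σ u = x` and every `b ∈ σ⁻¹(x)` can be written uniquely as `b = κ a + u`. -/
def IsRepOf {B : Type*} [AddMonoid B] (κ : A →+ B) (σ : B → M) (x : M) (u : B) : Prop :=
  σ u = x ∧ ∀ b : B, σ b = x → ∃! a : A, b = κ a + u

/-- A Schreier extension of the `M`-semimodule `A` by the monoid `M`:  a sequence
`A →^κ B →^σ M` of monoids (`σ` being a homomorphism from the additively written
monoid `B` to the multiplicatively written monoid `M`) such that `κ` is injective,
`σ` is surjective, `κ(A) = σ⁻¹(1)`, every `x ∈ M` admits a representative, and
moreover `b + κ a = κ (σ b • a) + b` for all `a ∈ A`, `b ∈ B`. -/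
structure SchreierExtension where
  /-- the middle monoid of the extension -/
  B : Type (max u v)
  [instB : AddMonoid B]
  κ : A →+ B
  σ : B → M
  sigma_zero : σ 0 = 1
  sigma_add : ∀ b₁ b₂ : B, σ (b₁ + b₂) = σ b₁ * σ b₂
  kappa_inj : Function.Injective κ
  sigma_surj : Function.Surjective σ
  range_eq : ∀ b : B, σ b = 1 ↔ b ∈ Set.range κ
  rep_exists : ∀ x : M, ∃ u : B, IsRepOf M A κ σ x u
  compat : ∀ (a : A) (b : B), b + κ a = κ (σ b • a) + b

attribute [instance] SchreierExtension.instB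

variable {M A}

/-- `u` is a representative of the Schreier extension `E` over `x`. -/
def SchreierExtension.IsRep (E : SchreierExtension M A) (x : M) (u : E.B) : Prop :=
  IsRepOf M A E.κ E.σ x u

variable {A' : Type v} [AddCommMonoid A'] [DistribMulAction M A']

/-- `(α, β, 1_M)` is a morphism of Schreier extensions from `E` to `E'`:  the two squares
commute and `β` carries representatives to representatives. -/
def IsSchreierHom (E : SchreierExtension M A) (E' : SchreierExtension M A')
    (α : A →+ A') (β : E.B →+ E'.B) : Prop :=
  (∀ a : A, β (E.κ a) = E'.κ (α a)) ∧ (∀ b : E.B, E'.σ (β b) = E.σ b) ∧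
    ∀ (x : M) (u : E.B), E.IsRep x u → E'.IsRep x (β u)

/-- Two Schreier extensions of the `M`-semimodule `A` by `M` are congruent if there is a
monoid homomorphism between the middle monoids which commutes with the inclusions and the
projections and carries representatives to representatives, i.e. a morphism of the form
`(1_A, β, 1_M)`. -/
def SchreierCongruent (E E' : SchreierExtension M A) : Prop :=
  ∃ β : E.B →+ E'.B, IsSchreierHom E E' (AddMonoidHom.id A) β

end SchreierSemimodule


section Cocycles

variable (M : Type u) (A : Type v) [Monoid M] [AddCommMonoid A] [DistribMulAction M A]

/-- A (normalized) `2`-cocycle of the monoid `M` with coefficients in the `M`-semimodule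
`A`: `f (x, 1) = 0 = f (1, y)` and `x • f (y, z) + f (x, y*z) = f (x*y, z) + f (x, y)`. -/
def IsCocycle (f : M → M → A) : Prop :=
  (∀ x : M, f x 1 = 0) ∧ (∀ y : M, f 1 y = 0) ∧
    ∀ x y z : M, x • f y z + f x (y * z) = f (x * y) z + f x y

/-- The type of (normalized) `2`-cocycles of `M` with coefficients in `A`. -/
def Cocycle : Type (max u v) := {f : M → M → A // IsCocycle M A f}

/-- The zero `2`-cocycle. -/
def zeroCocycle : Cocycle M A :=
  ⟨fun _ _ => (0 : A), fun _ => rfl, fun _ => rfl, by intro x y z; simp⟩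

/-- Two `2`-cocycles `f, f'` are strongly cohomologous if there is a function
`g : M → U(A)` into the group of invertible elements of `A` with `g 1 = 0` and
`f (x, y) = f' (x, y) + x • g y − g (x*y) + g x` for all `x, y ∈ M`. -/
def StronglyCohomologous (f f' : M → M → A) : Prop :=
  ∃ g : M → AddUnits A, g 1 = 0 ∧
    ∀ x y : M, f x y = f' x y + x • (g y : A) + ((-(g (x * y)) : AddUnits A) : A) + (g x : A)

/-- Two `2`-cocycles `f, f'` are cohomologous if there are functions `g₁, g₂ : M → A` with
`g₁ 1 = 0 = g₂ 1` and
`f (x,y) + x • g₁ y + g₁ x + g₂ (x*y) = f' (x,y) + x • g₂ y + g₂ x + g₁ (x*y)`. -/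
def Cohomologous (f f' : M → M → A) : Prop :=
  ∃ g₁ g₂ : M → A, g₁ 1 = 0 ∧ g₂ 1 = 0 ∧
    ∀ x y : M, f x y + x • g₁ y + g₁ x + g₂ (x * y)
      = f' x y + x • g₂ y + g₂ x + g₁ (x * y)

variable {M A}

/-- The underlying set `B_f = A × M` of the Schreier extension `E_f` associated with a
`2`-cocycle `f`. -/
@[ext] structure Bf (f : Cocycle M A) where
  a : A
  x : M

namespace Bf

variable (f : Cocycle M A)

/-- The composition `(a₁, x) + (a₂, y) = (a₁ + x • a₂ + f (x, y), x * y)` on `B_f`. -/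
protected def add (p q : Bf f) : Bf f := ⟨p.a + p.x • q.a + f.1 p.x q.x, p.x * q.x⟩

instance : Zero (Bf f) := ⟨⟨0, 1⟩⟩
instance : Add (Bf f) := ⟨Bf.add f⟩

instance : AddMonoid (Bf f) where
  nsmul := nsmulRec
  add_assoc p q r := by
    show (Bf.add f (Bf.add f p q) r) = Bf.add f p (Bf.add f q r)
    unfold Bf.add
    have h := f.2.2.2 p.x q.x r.x
    simp only [Bf.mk.injEq]
    refine ⟨?_, mul_assoc _ _ _⟩
    calc p.a + p.x • q.a + f.1 p.x q.x + (p.x * q.x) • r.a + f.1 (p.x * q.x) r.x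
        = p.a + p.x • q.a + p.x • (q.x • r.a) + (f.1 (p.x * q.x) r.x + f.1 p.x q.x) := by
          rw [mul_smul]; abel
      _ = p.a + p.x • q.a + p.x • (q.x • r.a) + (p.x • f.1 q.x r.x + f.1 p.x (q.x * r.x)) := by
          rw [h]
      _ = p.a + p.x • (q.a + q.x • r.a + f.1 q.x r.x) + f.1 p.x (q.x * r.x) := by
          rw [smul_add, smul_add]; abel
  zero_add p := by
    show Bf.add f ⟨0, 1⟩ p = p
    unfold Bf.add
    cases p with
    | mk a x => simp [f.2.2.1 x]
  add_zero p := by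
    show Bf.add f p ⟨0, 1⟩ = p
    unfold Bf.add
    cases p with
    | mk a x => simp [f.2.1 x]

theorem add_def (p q : Bf f) : p + q = ⟨p.a + p.x • q.a + f.1 p.x q.x, p.x * q.x⟩ := rfl

theorem zero_def : (0 : Bf f) = ⟨0, 1⟩ := rfl

end Bf

/-- The inclusion `κ_f : A → B_f`, `a ↦ (a, 1)`. -/
def kappaF (f : Cocycle M A) : A →+ Bf f where
  toFun a := ⟨a, 1⟩
  map_zero' := rfl
  map_add' a b := by
    rw [Bf.add_def]
    simp [f.2.2.1]

/-- The projection `σ_f : B_f → M`, `(a, x) ↦ x`. -/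
def sigmaF (f : Cocycle M A) : Bf f → M := fun p => p.x

end Cocycles

section ExtOfCocycle

variable {M : Type u} {A : Type v} [Monoid M] [AddCommMonoid A] [DistribMulAction M A]

/-- The Schreier extension `E_f : A →^{κ_f} B_f →^{σ_f} M` of the `M`-semimodule `A` by `M`
associated with a `2`-cocycle `f`. -/
def extOfCocycle (f : Cocycle M A) : SchreierExtension M A where
  B := Bf f
  κ := kappaF f
  σ := sigmaF f
  sigma_zero := rfl
  sigma_add _ _ := rfl
  kappa_inj a b h := congrArg Bf.a h
  sigma_surj x := ⟨⟨0, x⟩, rfl⟩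
  range_eq b := by
    constructor
    · intro h
      exact ⟨b.a, by cases b; cases h; rfl⟩
    · rintro ⟨a, rfl⟩
      rfl
  rep_exists x := by
    refine ⟨⟨0, x⟩, rfl, fun b hb => ⟨b.a, ?_, ?_⟩⟩
    · cases b with
      | mk a y =>
        have hx : y = x := hb
        subst hx
        show Bf.mk a y = kappaF f a + ⟨0, y⟩
        rw [show kappaF f a = ⟨a, 1⟩ from rfl, Bf.add_def]
        simp [f.2.2.1]
    · intro a' ha'
      rw [show kappaF f a' = ⟨a', 1⟩ from rfl, Bf.add_def] at ha'
      have := congrArg Bf.a ha'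
      simpa [f.2.2.1] using this.symm
  compat a b := by
    show b + kappaF f a = kappaF f (b.x • a) + b
    rw [show kappaF f a = ⟨a, 1⟩ from rfl, show kappaF f (b.x • a) = ⟨b.x • a, 1⟩ from rfl,
      Bf.add_def, Bf.add_def]
    simp [f.2.1, f.2.2.1, add_comm]

end ExtOfCocycle

section Semidirect

variable (M : Type u) (A : Type v) [Monoid M] [AddCommMonoid A] [DistribMulAction M A]

/-- The underlying set `A × M` of the semidirect product `A ⋊ M`. -/
@[ext] structure SemidirectCarrier where
  a : A
  x : M

namespace SemidirectCarrier

variable {M A}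

/-- The composition `(a₁, x) + (a₂, y) = (a₁ + x • a₂, x * y)` on `A ⋊ M`. -/
protected def add (p q : SemidirectCarrier M A) : SemidirectCarrier M A :=
  ⟨p.a + p.x • q.a, p.x * q.x⟩

instance : Zero (SemidirectCarrier M A) := ⟨⟨0, 1⟩⟩
instance : Add (SemidirectCarrier M A) := ⟨SemidirectCarrier.add⟩

instance : AddMonoid (SemidirectCarrier M A) where
  nsmul := nsmulRec
  add_assoc p q r := by
    show SemidirectCarrier.add (SemidirectCarrier.add p q) r
      = SemidirectCarrier.add p (SemidirectCarrier.add q r)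
    unfold SemidirectCarrier.add
    simp only [SemidirectCarrier.mk.injEq]
    exact ⟨by rw [smul_add, mul_smul]; abel, mul_assoc _ _ _⟩
  zero_add p := by
    show SemidirectCarrier.add ⟨0, 1⟩ p = p
    unfold SemidirectCarrier.add
    cases p with
    | mk a x => simp
  add_zero p := by
    show SemidirectCarrier.add p ⟨0, 1⟩ = p
    unfold SemidirectCarrier.add
    cases p with
    | mk a x => simp

theorem add_def (p q : SemidirectCarrier M A) : p + q = ⟨p.a + p.x • q.a, p.x * q.x⟩ := rfl

end SemidirectCarrier

/-- The semidirect product extension `0 : A →^ι A ⋊ M →^π M`, with `ι a = (a, 1)` and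
`π (a, x) = x`. -/
def semidirectExtension : SchreierExtension M A where
  B := SemidirectCarrier M A
  κ :=
    { toFun := fun a => ⟨a, 1⟩
      map_zero' := rfl
      map_add' := fun a b => by rw [SemidirectCarrier.add_def]; simp }
  σ := fun p => p.x
  sigma_zero := rfl
  sigma_add _ _ := rfl
  kappa_inj a b h := congrArg SemidirectCarrier.a h
  sigma_surj x := ⟨⟨0, x⟩, rfl⟩
  range_eq b := by
    constructor
    · intro h
      exact ⟨b.a, by cases b; cases h; rfl⟩
    · rintro ⟨a, rfl⟩
      rfl
  rep_exists x := by
    refine ⟨⟨0, x⟩, rfl, fun b hb => ⟨b.a, ?_, ?_⟩⟩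
    · cases b with
      | mk a y =>
        have hx : y = x := hb
        subst hx
        show SemidirectCarrier.mk a y = SemidirectCarrier.add ⟨a, 1⟩ ⟨0, y⟩
        unfold SemidirectCarrier.add
        simp
    · intro a' ha'
      have := congrArg SemidirectCarrier.a ha'
      simpa [SemidirectCarrier.add_def] using this.symm
  compat a b := by
    show SemidirectCarrier.add b ⟨a, 1⟩ = SemidirectCarrier.add ⟨b.x • a, 1⟩ b
    unfold SemidirectCarrier.add
    simp [add_comm]

end Semidirect

theorem congruent_stronglyCohomologous_aux {M : Type u} {A : Type v}
    [Monoid M] [AddCommMonoid A] [DistribMulAction M A]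
    (F F' : Cocycle M A)
    (hcong : SchreierCongruent (extOfCocycle F) (extOfCocycle F')) :
    StronglyCohomologous M A F.1 F'.1 := by
  obtain ⟨β, hκ₀, hσ₀, hrep⟩ := hcong
  have hκ : ∀ a : A, β (kappaF F a) = kappaF F' a := hκ₀
  have hσ : ∀ b : Bf F, (β b).x = b.x := hσ₀
  set g : M → A := fun x => (β ⟨0, x⟩).a with hg
  have hβ : ∀ x : M, β ⟨0, x⟩ = ⟨g x, x⟩ := fun x => Bf.ext rfl (hσ ⟨0, x⟩)
  have hβa : ∀ (a : A) (x : M), β ⟨a, x⟩ = ⟨a + g x, x⟩ := by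
    intro a x
    have h1 : (⟨a, x⟩ : Bf F) = kappaF F a + ⟨0, x⟩ := by
      rw [show kappaF F a = ⟨a, 1⟩ from rfl, Bf.add_def]
      simp [F.2.2.1 x]
    erw [h1, map_add, hκ, hβ,
      show kappaF F' a = ⟨a, 1⟩ from rfl, Bf.add_def]
    simp [F'.2.2.1 x]; rfl
  have key : ∀ x y : M, F.1 x y + g (x * y) = g x + x • g y + F'.1 x y := by
    intro x y
    have h1 : (⟨0, x⟩ : Bf F) + ⟨0, y⟩ = ⟨F.1 x y, x * y⟩ := by
      rw [Bf.add_def]; simp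
    have h2 : β (⟨0, x⟩ + ⟨0, y⟩) = β ⟨0, x⟩ + β ⟨0, y⟩ := map_add β _ _
    erw [h1, hβa, hβ, hβ, Bf.add_def] at h2
    have h3 := congrArg Bf.a h2
    simpa using h3
  have hinv : ∀ x : M, ∃ a : A, a + g x = 0 := by
    intro x
    have hrepx : IsRepOf M A (kappaF F) (sigmaF F) x (⟨0, x⟩ : Bf F) := by
      refine ⟨rfl, fun b hb => ⟨b.a, ?_, ?_⟩⟩
      · cases b with
        | mk a y =>
          have hx : y = x := hb
          subst hx
          show Bf.mk a y = kappaF F a + ⟨0, y⟩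
          rw [show kappaF F a = ⟨a, 1⟩ from rfl, Bf.add_def]
          simp [F.2.2.1]
      · intro a' ha'
        rw [show kappaF F a' = ⟨a', 1⟩ from rfl, Bf.add_def] at ha'
        have := congrArg Bf.a ha'
        simpa [F.2.2.1] using this.symm
    have hrepx' : (extOfCocycle F).IsRep x ⟨0, x⟩ := hrepx
    obtain ⟨a, ha, -⟩ := (hrep x ⟨0, x⟩ hrepx').2 ⟨0, x⟩ rfl
    rw [hβ] at ha
    have ha2 : (⟨0, x⟩ : Bf F') = (⟨a, 1⟩ : Bf F') + ⟨g x, x⟩ := ha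
    rw [Bf.add_def] at ha2
    have := congrArg Bf.a ha2
    refine ⟨a, ?_⟩
    simpa [F'.2.2.1] using this.symm
  choose ninv hninv using hinv
  refine ⟨fun x => ⟨g x, ninv x, by rw [add_comm]; exact hninv x, hninv x⟩, ?_, ?_⟩
  · apply AddUnits.ext
    show g 1 = 0
    calc g 1 = (β ⟨0, 1⟩).a := rfl
      _ = (β 0).a := by rw [show (⟨0, 1⟩ : Bf F) = 0 from rfl]; rfl
      _ = (0 : Bf F').a := by rw [map_zero]; rfl
      _ = 0 := rfl
  · intro x y
    show F.1 x y = F'.1 x y + x • g y + ninv (x * y) + g x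
    have h0 : F.1 x y = F.1 x y + (g (x * y) + ninv (x * y)) := by
      rw [add_comm (g _), hninv]; simp
    rw [h0, ← add_assoc, key x y]
    abel

/-- Let `M` be a monoid, `A` an `M`-semimodule, and `f, f' : M × M → A` `2`-cocycles.
If the Schreier extensions `E_f` and `E_{f'}` are congruent, then `f` and `f'` are
strongly cohomologous. -/
theorem congruent_stronglyCohomologous {M : Type u} {A : Type v}
    [Monoid M] [AddCommMonoid A] [DistribMulAction M A]
    (f f' : M → M → A) (hf : IsCocycle M A f) (hf' : IsCocycle M A f')
    (hcong : SchreierCongruent (extOfCocycle ⟨f, hf⟩) (extOfCocycle ⟨f', hf'⟩)) :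
    StronglyCohomologous M A f f' := by
  exact congruent_stronglyCohomologous_aux ⟨f, hf⟩ ⟨f', hf'⟩ hcong
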